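/- Let k ≥ 1 and let u : Fin (k+1) → [0,1] be the uniform grid u(i) = i/k. Suppose w : Fin (R+1) → [0,1] is monotone and admits u as a face, i.e. there is a monotone map α : Fin (k+1) → Fin (R+1) with w(α(i)) = i/k for all i. Then w(j+1) − w(j) ≤ 1/k for every j with j, j+1 ∈ Fin (R+1); consequently, for every monotone θ : Fin (n+1) → Fin (R+1) whose index span satisfies θ(n) ≤ θ(0) + m, the face v = w ∘ θ satisfies v(n) − v(0) ≤ m/k. -/

import Mathlib

/-- let `k ≥ 1` and let `u : Fin (k+1) → [0,1]` be the uniform grid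
`u i = i / k`. If a monotone simplex `w : Fin (R+1) → [0,1]` of the nerve of `[0,1]`
admits `u` as a face, i.e. there is a monotone `α : Fin (k+1) → Fin (R+1)` with
`w (α i) = i / k` for all `i`, then consecutive values of `w` differ by at most `1/k`;
consequently, every face `v = w ∘ θ` along a monotone `θ : Fin (n+1) → Fin (R+1)` of
index span at most `m` (i.e. `θ(n) ≤ θ(0) + m`) satisfies `v(n) − v(0) ≤ m/k`. -/
theorem statement13 (k R : ℕ) (hk : 1 ≤ k)
    (w : Fin (R + 1) → unitInterval) (hw : Monotone w)
    (α : Fin (k + 1) → Fin (R + 1)) (hα : Monotone α)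
    (hgrid : ∀ i : Fin (k + 1), (w (α i) : ℝ) = (i : ℕ) / k) :
    (∀ j : Fin R, (w j.succ : ℝ) - (w j.castSucc : ℝ) ≤ 1 / k) ∧
    ∀ (n m : ℕ) (θ : Fin (n + 1) → Fin (R + 1)), Monotone θ →
      ((θ (Fin.last n) : ℕ) ≤ (θ 0 : ℕ) + m) →
      (w (θ (Fin.last n)) : ℝ) - (w (θ 0) : ℝ) ≤ (m : ℝ) / k := by
  classical
  have hk0 : (0 : ℝ) < k := by exact_mod_cast hk
  have consec : ∀ j : Fin R, (w j.succ : ℝ) - (w j.castSucc : ℝ) ≤ 1 / k := by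
    intro j
    by_cases hS : ∃ i : Fin (k + 1), α i ≤ j.castSucc
    · obtain ⟨i0, hi0⟩ := hS
      set S : Finset (Fin (k + 1)) := Finset.univ.filter (fun i => α i ≤ j.castSucc) with hSdef
      have hne : S.Nonempty := ⟨i0, by simp [hSdef, hi0]⟩
      set i := S.max' hne with hi
      have hiS : α i ≤ j.castSucc := by
        have := S.max'_mem hne
        simp [hSdef] at this
        exact this
      have hAi : ((i : ℕ) : ℝ) / k ≤ (w j.castSucc : ℝ) := by
        rw [← hgrid i]; exact_mod_cast hw hiS
      by_cases hlast : (i : ℕ) = k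
      · have h1 : (1 : ℝ) ≤ (w j.castSucc : ℝ) := by
          have := hAi
          rw [hlast] at this
          rw [div_self (ne_of_gt hk0)] at this
          exact this
        have h3 : (w j.succ : ℝ) ≤ 1 := (w j.succ).2.2
        have : (0:ℝ) ≤ 1 / k := by positivity
        linarith
      · have hlt : (i : ℕ) < k := lt_of_le_of_ne (Nat.lt_succ_iff.mp i.isLt) hlast
        set i' : Fin (k + 1) := ⟨(i : ℕ) + 1, by omega⟩ with hi'
        have hnot : ¬ α i' ≤ j.castSucc := by
          intro h
          have hmem : i' ∈ S := by simp [hSdef, h]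
          have hle := S.le_max' i' hmem
          have : ((i : ℕ) + 1 : ℕ) ≤ (i : ℕ) := hle
          omega
        have hge : j.succ ≤ α i' := by
          have hlt' : j.castSucc < α i' := lt_of_not_ge hnot
          rw [Fin.le_def]
          rw [Fin.lt_def] at hlt'
          simp only [Fin.val_succ, Fin.coe_castSucc] at *
          omega
        have hB : (w j.succ : ℝ) ≤ ((i : ℕ) + 1 : ℝ) / k := by
          have h1 : (w j.succ : ℝ) ≤ (w (α i') : ℝ) := by exact_mod_cast hw hge
          rw [hgrid i'] at h1
          simpa [hi'] using h1
        have heq : ((i : ℕ) + 1 : ℝ) / k - ((i : ℕ) : ℝ) / k = 1 / k := by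
          field_simp
          ring
        linarith
    · push_neg at hS
      have h0 : j.castSucc < α 0 := hS 0
      have hge : j.succ ≤ α 0 := by
        rw [Fin.le_def]
        rw [Fin.lt_def] at h0
        simp only [Fin.val_succ, Fin.coe_castSucc] at *
        omega
      have hB : (w j.succ : ℝ) ≤ 0 := by
        have h1 : (w j.succ : ℝ) ≤ (w (α 0) : ℝ) := by exact_mod_cast hw hge
        rw [hgrid 0] at h1
        simpa using h1
      have hA : (0 : ℝ) ≤ (w j.castSucc : ℝ) := (w j.castSucc).2.1
      have : (0:ℝ) ≤ 1 / k := by positivity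
      linarith
  refine ⟨consec, ?_⟩
  have key : ∀ d : ℕ, ∀ a b : Fin (R + 1), (b : ℕ) ≤ (a : ℕ) + d →
      (w b : ℝ) - (w a : ℝ) ≤ (d : ℝ) / k := by
    intro d
    induction d with
    | zero =>
      intro a b h
      have hba : b ≤ a := Fin.le_def.mpr (by omega)
      have h1 : (w b : ℝ) ≤ (w a : ℝ) := by exact_mod_cast hw hba
      rw [Nat.cast_zero, zero_div]
      linarith
    | succ d ih =>
      intro a b h
      by_cases hba : (b : ℕ) ≤ (a : ℕ) + d
      · have h1 := ih a b hba
        have heq : ((d : ℝ) + 1) / k = (d : ℝ) / k + 1 / k := by ring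
        have h0 : (0 : ℝ) ≤ 1 / k := by positivity
        push_cast
        linarith
      · have hb : (b : ℕ) = (a : ℕ) + d + 1 := by omega
        have hbpos : 0 < (b : ℕ) := by omega
        have hbR : (b : ℕ) - 1 < R := by omega
        set j : Fin R := ⟨(b : ℕ) - 1, hbR⟩ with hj
        have hbs : b = j.succ := by
          ext
          simp [hj]
          omega
        have hcs : (j.castSucc : ℕ) = (b : ℕ) - 1 := rfl
        have h1 := consec j
        have h2 := ih a j.castSucc (by omega)
        rw [hbs]
        push_cast
        have heq : ((d : ℝ) + 1) / k = (d : ℝ) / k + 1 / k := by ring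
        linarith
  intro n m θ hθ hspan
  exact key m (θ 0) (θ (Fin.last n)) hspan
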